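/- Let ψ̂, φ̂ be real numbers with ψ̂ > 1 and φ̂ < 0, let c > 0, set l = (ψ̂(1 − φ̂)/(φ̂(1 − ψ̂)))^{1/(ψ̂ − φ̂)}, and define H(z) = (ψ̂/(ψ̂ − φ̂))(z/c)^{φ̂} − (φ̂/(ψ̂ − φ̂))(z/c)^{ψ̂} for z > 0. Then H(lc) = (ψ̂/(ψ̂ − 1))·l^{φ̂}, and the function z ↦ z/H(z) attains a strict global maximum over (0, ∞) at z = lc, with maximum value ((ψ̂ − 1)/ψ̂)·(ψ̂(1 − φ̂)/(φ̂(1 − ψ̂)))^{(1 − φ̂)/(ψ̂ − φ̂)}·c. -/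

import Mathlib

open Real

/-- Strict two-point weighted AM-GM inequality. -/
lemma amgm_strict {w₁ w₂ a b : ℝ} (hw₁ : 0 < w₁) (hw₂ : 0 < w₂) (hw : w₁ + w₂ = 1)
    (ha : 0 < a) (hb : 0 < b) (hab : a ≠ b) :
    a ^ w₁ * b ^ w₂ < w₁ * a + w₂ * b := by
  have hlog : Real.log a ≠ Real.log b := fun h =>
    hab (by rw [← Real.exp_log ha, ← Real.exp_log hb, h])
  have h := strictConvexOn_exp.2 (Set.mem_univ (Real.log a)) (Set.mem_univ (Real.log b))
    hlog hw₁ hw₂ hw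
  simp only [smul_eq_mul, Real.exp_log ha, Real.exp_log hb] at h
  rw [Real.rpow_def_of_pos ha, Real.rpow_def_of_pos hb, ← Real.exp_add]
  calc Real.exp (Real.log a * w₁ + Real.log b * w₂)
      = Real.exp (w₁ * Real.log a + w₂ * Real.log b) := by ring_nf
    _ < w₁ * a + w₂ * b := h

/-- Core inequality. -/
lemma core_ineq {ψ φ x : ℝ} (hψ : 1 < ψ) (hφ : φ < 0) (hx : 0 < x) (hx1 : x ≠ 1) :
    (ψ - φ) * x < (ψ - 1) * x ^ φ + (1 - φ) * x ^ ψ := by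
  have hψφ : 0 < ψ - φ := by linarith
  have ha : (0:ℝ) < x ^ (φ - 1) := Real.rpow_pos_of_pos hx _
  have hb : (0:ℝ) < x ^ (ψ - 1) := Real.rpow_pos_of_pos hx _
  have hlogx : Real.log x ≠ 0 := by
    intro h
    rcases Real.log_eq_zero.mp h with h' | h' | h' <;> [exact hx.ne' h'; exact hx1 h'; linarith]
  have hab : x ^ (φ - 1) ≠ x ^ (ψ - 1) := by
    intro h
    have := congrArg Real.log h
    rw [Real.log_rpow hx, Real.log_rpow hx] at this
    have : φ = ψ := by
      have := mul_right_cancel₀ hlogx this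
      linarith
    linarith
  have key := amgm_strict (w₁ := (ψ - 1) / (ψ - φ)) (w₂ := (1 - φ) / (ψ - φ))
    (div_pos (by linarith) hψφ) (div_pos (by linarith) hψφ)
    (by rw [← add_div, div_eq_one_iff_eq hψφ.ne']; ring) ha hb hab
  have hgeo : (x ^ (φ - 1)) ^ ((ψ - 1) / (ψ - φ)) * (x ^ (ψ - 1)) ^ ((1 - φ) / (ψ - φ)) = 1 := by
    rw [← Real.rpow_mul hx.le, ← Real.rpow_mul hx.le, ← Real.rpow_add hx]
    rw [show (φ - 1) * ((ψ - 1) / (ψ - φ)) + (ψ - 1) * ((1 - φ) / (ψ - φ)) = 0 by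
      field_simp; ring]
    exact Real.rpow_zero x
  rw [hgeo] at key
  -- key : 1 < (ψ-1)/(ψ-φ) * x^(φ-1) + (1-φ)/(ψ-φ) * x^(ψ-1)
  have hxφ : x * x ^ (φ - 1) = x ^ φ := by
    nth_rewrite 1 [← Real.rpow_one x]
    rw [← Real.rpow_add hx]; congr 1; ring
  have hxψ : x * x ^ (ψ - 1) = x ^ ψ := by
    nth_rewrite 1 [← Real.rpow_one x]
    rw [← Real.rpow_add hx]; congr 1; ring
  have hmul := (mul_lt_mul_iff_right₀ (mul_pos hψφ hx)).mpr key
  calc (ψ - φ) * x = (ψ - φ) * x * 1 := by ring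
    _ < (ψ - φ) * x * ((ψ - 1) / (ψ - φ) * x ^ (φ - 1) + (1 - φ) / (ψ - φ) * x ^ (ψ - 1)) := hmul
    _ = (ψ - 1) * (x * x ^ (φ - 1)) + (1 - φ) * (x * x ^ (ψ - 1)) := by
        field_simp
    _ = (ψ - 1) * x ^ φ + (1 - φ) * x ^ ψ := by rw [hxφ, hxψ]

/-- For `ψ̂ > 1`, `φ̂ < 0`, `c > 0`,
`l = (ψ̂(1 − φ̂)/(φ̂(1 − ψ̂)))^{1/(ψ̂ − φ̂)}` and
`H(z) = (ψ̂/(ψ̂ − φ̂))(z/c)^{φ̂} − (φ̂/(ψ̂ − φ̂))(z/c)^{ψ̂}`, one has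
`H(lc) = (ψ̂/(ψ̂ − 1))·l^{φ̂}`, and `z ↦ z/H(z)` attains a strict global maximum
over `(0, ∞)` at `z = lc`, with maximum value
`((ψ̂ − 1)/ψ̂)·(ψ̂(1 − φ̂)/(φ̂(1 − ψ̂)))^{(1 − φ̂)/(ψ̂ − φ̂)}·c`. -/
theorem floor_option_maximum (ψ φ c : ℝ) (hψ : 1 < ψ) (hφ : φ < 0) (hc : 0 < c)
    (l : ℝ) (hl : l = (ψ * (1 - φ) / (φ * (1 - ψ))) ^ (1 / (ψ - φ)))
    (H : ℝ → ℝ)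
    (hH : H = fun z : ℝ => ψ / (ψ - φ) * (z / c) ^ φ - φ / (ψ - φ) * (z / c) ^ ψ) :
    H (l * c) = ψ / (ψ - 1) * l ^ φ ∧
    (∀ z : ℝ, 0 < z → z ≠ l * c → z / H z < l * c / H (l * c)) ∧
    l * c / H (l * c) =
      (ψ - 1) / ψ * (ψ * (1 - φ) / (φ * (1 - ψ))) ^ ((1 - φ) / (ψ - φ)) * c := by
  have hψφ : 0 < ψ - φ := by linarith
  have hψ1 : 0 < ψ - 1 := by linarith
  have hne1 : φ ≠ 0 := hφ.ne
  have hne2 : (1:ℝ) - ψ ≠ 0 := by linarith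
  have hne3 : ψ - φ ≠ 0 := hψφ.ne'
  have hne4 : ψ - 1 ≠ 0 := hψ1.ne'
  have hne5 : ψ ≠ 0 := by linarith
  set A : ℝ := ψ * (1 - φ) / (φ * (1 - ψ)) with hA_def
  have hA : 0 < A := by
    apply div_pos (by nlinarith) (mul_pos_of_neg_of_neg hφ (by linarith))
  have hlpos : 0 < l := by rw [hl]; exact Real.rpow_pos_of_pos hA _
  have hlA : l ^ (ψ - φ) = A := by
    rw [hl, ← Real.rpow_mul hA.le, one_div_mul_cancel hψφ.ne', Real.rpow_one]
  have hlψ : l ^ ψ = l ^ φ * A := by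
    rw [← hlA, ← Real.rpow_add hlpos]; congr 1; ring
  have hlφpos : 0 < l ^ φ := Real.rpow_pos_of_pos hlpos _
  have hlc : l * c / c = l := mul_div_cancel_right₀ l hc.ne'
  have h1 : H (l * c) = ψ / (ψ - 1) * l ^ φ := by
    rw [hH]
    simp only [hlc]
    rw [hlψ, hA_def]
    field_simp
    ring
  have hHlc_pos : 0 < H (l * c) := by
    rw [h1]; positivity
  refine ⟨h1, ?_, ?_⟩
  · intro z hz hzne
    have hHz : 0 < H z := by
      rw [hH]
      have h2 : 0 < ψ / (ψ - φ) * (z / c) ^ φ := by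
        apply mul_pos (by positivity) (Real.rpow_pos_of_pos (by positivity) _)
      have h3 : φ / (ψ - φ) * (z / c) ^ ψ < 0 :=
        mul_neg_of_neg_of_pos (div_neg_of_neg_of_pos hφ hψφ)
          (Real.rpow_pos_of_pos (by positivity) _)
      simp only
      linarith
    rw [div_lt_div_iff₀ hHz hHlc_pos, h1]
    set x : ℝ := z / (l * c) with hx_def
    have hxpos : 0 < x := div_pos hz (by positivity)
    have hx1 : x ≠ 1 := by
      intro h
      apply hzne
      rw [hx_def, div_eq_one_iff_eq (by positivity)] at h
      exact h
    have hzx : z = x * (l * c) := by rw [hx_def, div_mul_cancel₀ z (by positivity : l * c ≠ 0)]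
    have hzc : z / c = x * l := by rw [hzx]; field_simp
    have hkey := core_ineq hψ hφ hxpos hx1
    have hxφ : (z / c) ^ φ = x ^ φ * l ^ φ := by
      rw [hzc, Real.mul_rpow hxpos.le hlpos.le]
    have hxψ : (z / c) ^ ψ = x ^ ψ * (l ^ φ * A) := by
      rw [hzc, Real.mul_rpow hxpos.le hlpos.le, hlψ]
    simp only [hH]
    rw [hxφ, hxψ, hzx]
    have hexpand : l * c * (ψ / (ψ - φ) * (x ^ φ * l ^ φ) - φ / (ψ - φ) * (x ^ ψ * (l ^ φ * A)))
        - x * (l * c) * (ψ / (ψ - 1) * l ^ φ)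
        = (l * c * l ^ φ * (ψ / ((ψ - 1) * (ψ - φ)))) *
          ((ψ - 1) * x ^ φ + (1 - φ) * x ^ ψ - (ψ - φ) * x) := by
      rw [hA_def]
      field_simp
      ring
    have hM : 0 < l * c * l ^ φ * (ψ / ((ψ - 1) * (ψ - φ))) :=
      mul_pos (mul_pos (mul_pos hlpos hc) hlφpos)
        (div_pos (by linarith) (mul_pos hψ1 hψφ))
    have hP : (0:ℝ) < (ψ - 1) * x ^ φ + (1 - φ) * x ^ ψ - (ψ - φ) * x := by linarith
    linarith [hexpand, mul_pos hM hP]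
  · rw [h1]
    have hl1φ : l ^ (1 - φ) = A ^ ((1 - φ) / (ψ - φ)) := by
      rw [hl, ← Real.rpow_mul hA.le]
      congr 1
      ring
    rw [← hl1φ]
    have : l ^ (1 - φ) = l / l ^ φ := by
      rw [eq_div_iff hlφpos.ne', ← Real.rpow_add hlpos,
        show 1 - φ + φ = (1:ℝ) by ring, Real.rpow_one]
    rw [this]
    field_simp
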